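/- Let μ > 0 and λ ∈ [−1,0), and set b(τ) := μ(1+τ)^{−λ}. There exist constants c0 > 0, C > 0, K > 0 and T0 ≥ 0, depending only on μ and λ, with the following property: for every r with 0 ≤ r ≤ c0, every pair of times T0 ≤ s ≤ t, and every twice differentiable function y : ℝ → ℝ satisfying y″(τ) + r²·y(τ) + b(τ)·y′(τ) = 0 for all τ ∈ [s,t] with initial data y(s) = 1 and y′(s) = 0, one has |y(t)| ≤ K·exp( −C·r²·∫_s^t b(τ)^{−1} dτ ). -/

import Mathlib

open Set MeasureTheory

lemma key_ineq (B B' r p q : ℝ) (hB : 0 < B) (hr : 0 ≤ r) (hrB : r ≤ B)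
    (hB'0 : 0 ≤ B') (hB'B : B' ≤ B^2) :
    (2*q*(-(r^2*p) - B*q) + 2*r^2*(p*q)
      + (1/2)*r^2*(-(B'/B^2)*(p*q) + B⁻¹*(q*q + p*(-(r^2*p) - B*q))))
    + (1/10)*r^2*B⁻¹*(q^2 + r^2*p^2 + (1/2)*(r^2*B⁻¹)*(p*q)) ≤ 0 := by
  have hB2 : (0:ℝ) < B^2 := by positivity
  have hBne : B ≠ 0 := ne_of_gt hB
  have hP : (2*q*(-(r^2*p) - B*q) + 2*r^2*(p*q)
      + (1/2)*r^2*(-(B'/B^2)*(p*q) + B⁻¹*(q*q + p*(-(r^2*p) - B*q))))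
    + (1/10)*r^2*B⁻¹*(q^2 + r^2*p^2 + (1/2)*(r^2*B⁻¹)*(p*q))
    = (-2*B^3*q^2 - (1/2)*r^2*B'*(p*q) + (3/5)*r^2*B*q^2 - (2/5)*r^4*B*p^2
       - (1/2)*r^2*B^2*(p*q) + (1/20)*r^4*(p*q)) / B^2 := by
    field_simp
    ring
  rw [hP]
  apply div_nonpos_of_nonpos_of_nonneg _ hB2.le
  have hr2 : r^2 ≤ B^2 := by nlinarith
  have hX : 0 ≤ B^3*q^2 := by positivity
  have hrp : 0 ≤ r^4*B*p^2 := by positivity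
  rcases le_or_gt 0 (p*q) with hpq | hpq
  · nlinarith [mul_nonneg hpq (mul_nonneg (sq_nonneg r) hB'0),
      mul_nonneg (mul_nonneg hB.le (sq_nonneg q)) (sub_nonneg.mpr hr2),
      mul_nonneg hpq (mul_nonneg (sq_nonneg r) (sub_nonneg.mpr hr2)),
      mul_nonneg hpq (pow_nonneg hr 4)]
  · have hpq' : 0 ≤ -(p*q) := by linarith
    nlinarith [mul_nonneg hB.le (sq_nonneg (B*q + (1/2)*r^2*p)),
      mul_nonneg hpq' (mul_nonneg (sq_nonneg r) (sub_nonneg.mpr hB'B)),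
      mul_nonneg hpq' (pow_nonneg hr 4),
      mul_nonneg hpq' (mul_nonneg (sq_nonneg r) (sub_nonneg.mpr hr2)),
      mul_nonneg (mul_nonneg hB.le (sq_nonneg q)) (sub_nonneg.mpr hr2)]

set_option maxHeartbeats 2000000 in
/-- Low-frequency upper bound on the Fourier multiplier `Φ₁ᵛ(t,s,r)` of the
damped wave equation `∂_t²v − Δv + b(t)∂_t v = 0` with `b(τ) = μ(1+τ)^(−λ)`. -/
theorem Phi1v_low_frequency_upper_bound
    (μ lam : ℝ) (hμ : 0 < μ) (hlam : lam ∈ Set.Ico (-1:ℝ) 0) :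
    ∃ c0 > (0:ℝ), ∃ C > (0:ℝ), ∃ K > (0:ℝ), ∃ T0 ≥ (0:ℝ),
      ∀ r : ℝ, 0 ≤ r → r ≤ c0 → ∀ s t : ℝ, T0 ≤ s → s ≤ t →
        ∀ y : ℝ → ℝ,
          (∀ τ : ℝ, DifferentiableAt ℝ y τ) →
          (∀ τ : ℝ, DifferentiableAt ℝ (deriv y) τ) →
          (∀ τ ∈ Set.Icc s t,
            deriv (deriv y) τ + r^2 * y τ + (μ * (1+τ)^(-lam)) * deriv y τ = 0) →
          y s = 1 → deriv y s = 0 →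
          |y t| ≤ K * Real.exp (-C * r^2 * ∫ τ in s..t, (μ * (1+τ)^(-lam))⁻¹) := by
  obtain ⟨hlam1, hlam0⟩ := hlam
  refine ⟨μ, hμ, 1/20, by norm_num, 2, by norm_num, max 0 (1/μ), le_max_left _ _, ?_⟩
  intro r hr0 hrμ s t hT0s hst y hy1 hy2 hode hys hys'
  set b : ℝ → ℝ := fun τ => μ * (1+τ)^(-lam) with hbdef
  set bp : ℝ → ℝ := fun τ => μ * ((-lam) * (1+τ)^(-lam-1)) with hbpdef
  have hs0 : 0 ≤ s := le_trans (le_max_left _ _) hT0s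
  have hsμ : 1/μ ≤ s := le_trans (le_max_right _ _) hT0s
  have hbase : ∀ τ, s ≤ τ → (1:ℝ) ≤ 1 + τ := fun τ h => by linarith
  have hBpos : ∀ τ, s ≤ τ → 0 < b τ := by
    intro τ h
    exact mul_pos hμ (Real.rpow_pos_of_pos (by linarith [hbase τ h]) _)
  have hBμ : ∀ τ, s ≤ τ → μ ≤ b τ := by
    intro τ h
    have h1 : (1:ℝ) ≤ (1+τ)^(-lam) := Real.one_le_rpow (hbase τ h) (by linarith)
    calc μ = μ * 1 := by ring
    _ ≤ μ * (1+τ)^(-lam) := by nlinarith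
  have hbderiv : ∀ τ, s ≤ τ → HasDerivAt b (bp τ) τ := by
    intro τ h
    have h1 : HasDerivAt (fun σ : ℝ => 1+σ) 1 τ := by
      simpa using (hasDerivAt_id τ).const_add (1:ℝ)
    have h2 : HasDerivAt (fun x : ℝ => x^(-lam)) ((-lam)*(1+τ)^(-lam-1)) (1+τ) :=
      Real.hasDerivAt_rpow_const (Or.inl (by nlinarith [hbase τ h]))
    have h3 := (h2.comp τ h1).const_mul μ
    simpa [hbpdef] using h3
  have hbp0 : ∀ τ, s ≤ τ → 0 ≤ bp τ := by
    intro τ h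
    exact mul_nonneg hμ.le (mul_nonneg (by linarith) (Real.rpow_nonneg (by linarith [hbase τ h]) _))
  have hbple : ∀ τ, s ≤ τ → bp τ ≤ (b τ)^2 := by
    intro τ h
    have hx : (1:ℝ) ≤ 1 + τ := hbase τ h
    have hx0 : (0:ℝ) < 1 + τ := by linarith
    have hA1 : (1:ℝ) ≤ (1+τ)^(-lam) := Real.one_le_rpow hx (by linarith)
    have hsplit : (1+τ)^(-lam-1) = (1+τ)^(-lam) * (1+τ)⁻¹ := by
      rw [show -lam-1 = -lam + (-1) by ring, Real.rpow_add hx0, Real.rpow_neg_one]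
    have hinvμ : (1+τ)⁻¹ ≤ μ := by
      rw [inv_le_iff_one_le_mul₀ hx0]
      have : 1/μ ≤ τ := le_trans hsμ h
      calc (1:ℝ) = μ * (1/μ) := by field_simp
      _ ≤ μ * (1+τ) := by nlinarith
    have hinv0 : (0:ℝ) ≤ (1+τ)⁻¹ := by positivity
    have hA0 : (0:ℝ) < (1+τ)^(-lam) := Real.rpow_pos_of_pos hx0 _
    show μ * ((-lam) * (1+τ)^(-lam-1)) ≤ (μ * (1+τ)^(-lam))^2
    rw [hsplit]
    nlinarith [mul_nonneg (mul_nonneg hμ.le hA0.le) (sub_nonneg.mpr hinvμ),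
      mul_nonneg (mul_nonneg (mul_nonneg hμ.le hμ.le) hA0.le) (sub_nonneg.mpr hA1),
      mul_nonneg (mul_nonneg (mul_nonneg hμ.le hA0.le) hinv0) (by linarith : (0:ℝ) ≤ 1 - (-lam))]
  rcases eq_or_lt_of_le hr0 with hrz | hrpos
  · -- r = 0 : the solution is constant
    have hq0 : ∀ τ ∈ Icc s t, deriv y τ = 0 := by
      have hH : AntitoneOn (fun τ => (deriv y τ)^2) (Icc s t) := by
        apply antitoneOn_of_deriv_nonpos (convex_Icc s t)
        · exact fun τ _ => ((hy2 τ).continuousAt.pow 2).continuousWithinAt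
        · intro τ _
          exact ((hy2 τ).pow 2).differentiableWithinAt
        · intro τ hτ
          rw [interior_Icc] at hτ
          have hd : HasDerivAt (fun τ => (deriv y τ)^2)
              (2 * deriv y τ * deriv (deriv y) τ) τ := by
            simpa [mul_comm, mul_assoc] using (hy2 τ).hasDerivAt.fun_pow 2
          rw [hd.deriv]
          have := hode τ (Ioo_subset_Icc_self hτ)
          have hq' : deriv (deriv y) τ = - (b τ * deriv y τ) := by
            rw [← hrz] at this; simpa [hbdef] using by linarith
          rw [hq']
          have := hBpos τ (le_of_lt hτ.1)
          nlinarith [sq_nonneg (deriv y τ)]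
      intro τ hτ
      have h1 := hH (left_mem_Icc.mpr hst) hτ hτ.1
      have h2 : (deriv y s)^2 = 0 := by rw [hys']; ring
      have h3 : (deriv y τ)^2 = 0 := le_antisymm (by simpa [h2] using h1) (sq_nonneg _)
      exact pow_eq_zero_iff (by norm_num) |>.mp h3
    have hyt : y t = 1 := by
      have := constant_of_has_deriv_right_zero
        (f := y) (a := s) (b := t)
        (fun τ _ => (hy1 τ).continuousAt.continuousWithinAt)
        (fun τ hτ => by
          have h := (hy1 τ).hasDerivAt
          rw [hq0 τ (Ico_subset_Icc_self hτ)] at h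
          exact h.hasDerivWithinAt)
      rw [this t (right_mem_Icc.mpr hst), hys]
    rw [hyt, ← hrz]
    simp [Real.exp_zero]
  · -- main case r > 0
    have hrb : ∀ τ, s ≤ τ → r ≤ b τ := fun τ h => le_trans hrμ (hBμ τ h)
    have hbne : ∀ τ, s ≤ τ → b τ ≠ 0 := fun τ h => ne_of_gt (hBpos τ h)
    -- continuity of the integrand
    have hco : ContinuousOn (fun σ : ℝ => (b σ)⁻¹) (Ioi (-1 : ℝ)) := by
      apply ContinuousOn.inv₀
      · apply continuousOn_const.mul
        apply ContinuousOn.rpow_const ((continuousOn_const.add continuousOn_id))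
        intro x hx
        simp only [mem_Ioi] at hx
        exact Or.inl (by simp only [Pi.add_apply, id_eq]; intro hc; nlinarith)
      · intro x hx
        simp only [mem_Ioi] at hx
        exact ne_of_gt (mul_pos hμ (Real.rpow_pos_of_pos (by linarith) _))
    have hIderiv : ∀ τ ∈ Icc s t, HasDerivAt (fun σ => ∫ u in s..σ, (b u)⁻¹) ((b τ)⁻¹) τ := by
      intro τ hτ
      have hmem : τ ∈ Ioi (-1:ℝ) := by simp only [mem_Ioi]; linarith [hτ.1]
      apply intervalIntegral.integral_hasDerivAt_right
      · apply ContinuousOn.intervalIntegrable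
        apply hco.mono
        intro x hx
        rw [Set.uIcc_of_le hτ.1] at hx
        simp only [mem_Ioi]
        linarith [hx.1]
      · exact ContinuousOn.stronglyMeasurableAtFilter isOpen_Ioi hco τ hmem
      · exact hco.continuousAt (Ioi_mem_nhds (by simpa using hmem))
    -- derivative of the Lyapunov functional
    have hGd : ∀ τ ∈ Icc s t, HasDerivAt
        (fun σ => ((deriv y σ)^2 + r^2*(y σ)^2 + (1/2)*r^2*((b σ)⁻¹*(y σ * deriv y σ)))
          * Real.exp ((1/10)*r^2 * (∫ u in s..σ, (b u)⁻¹)))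
        ((2*(deriv y τ)*(deriv (deriv y) τ) + r^2*(2*(y τ)*(deriv y τ))
          + (1/2)*r^2*((-(bp τ)/(b τ)^2)*(y τ * deriv y τ)
              + (b τ)⁻¹*(deriv y τ * deriv y τ + y τ * deriv (deriv y) τ)))
          * Real.exp ((1/10)*r^2 * (∫ u in s..τ, (b u)⁻¹))
         + ((deriv y τ)^2 + r^2*(y τ)^2 + (1/2)*r^2*((b τ)⁻¹*(y τ * deriv y τ)))
          * (Real.exp ((1/10)*r^2 * (∫ u in s..τ, (b u)⁻¹)) * ((1/10)*r^2 * (b τ)⁻¹))) τ := by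
      intro τ hτ
      have h1 : HasDerivAt (fun σ => (deriv y σ)^2) (2*(deriv y τ)*(deriv (deriv y) τ)) τ := by
        simpa using (hy2 τ).hasDerivAt.fun_pow 2
      have h2 : HasDerivAt (fun σ => r^2*(y σ)^2) (r^2*(2*(y τ)*(deriv y τ))) τ := by
        have := ((hy1 τ).hasDerivAt.pow 2).const_mul (r^2)
        simpa using this
      have hinv : HasDerivAt (fun σ => (b σ)⁻¹) (-(bp τ)/(b τ)^2) τ :=
        (hbderiv τ hτ.1).inv (hbne τ hτ.1)
      have hpq : HasDerivAt (fun σ => y σ * deriv y σ)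
          (deriv y τ * deriv y τ + y τ * deriv (deriv y) τ) τ :=
        (hy1 τ).hasDerivAt.mul (hy2 τ).hasDerivAt
      have h3 : HasDerivAt (fun σ => (1/2)*r^2*((b σ)⁻¹*(y σ * deriv y σ)))
          ((1/2)*r^2*((-(bp τ)/(b τ)^2)*(y τ * deriv y τ)
              + (b τ)⁻¹*(deriv y τ * deriv y τ + y τ * deriv (deriv y) τ))) τ :=
        (hinv.mul hpq).const_mul ((1/2)*r^2)
      have hF := (h1.add h2).add h3
      have hE : HasDerivAt (fun σ => Real.exp ((1/10)*r^2 * (∫ u in s..σ, (b u)⁻¹)))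
          (Real.exp ((1/10)*r^2 * (∫ u in s..τ, (b u)⁻¹)) * ((1/10)*r^2 * (b τ)⁻¹)) τ :=
        (((hIderiv τ hτ).const_mul ((1/10)*r^2)).exp)
      exact hF.mul hE
    -- G is antitone
    have hanti : AntitoneOn
        (fun σ => ((deriv y σ)^2 + r^2*(y σ)^2 + (1/2)*r^2*((b σ)⁻¹*(y σ * deriv y σ)))
          * Real.exp ((1/10)*r^2 * (∫ u in s..σ, (b u)⁻¹))) (Icc s t) := by
      apply antitoneOn_of_deriv_nonpos (convex_Icc s t)
      · exact fun τ hτ => (hGd τ hτ).continuousAt.continuousWithinAt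
      · rw [interior_Icc]
        exact fun τ hτ => (hGd τ (Ioo_subset_Icc_self hτ)).differentiableAt.differentiableWithinAt
      · intro τ hτ
        rw [interior_Icc] at hτ
        have hτIcc : τ ∈ Icc s t := Ioo_subset_Icc_self hτ
        have hsτ : s ≤ τ := hτIcc.1
        rw [(hGd τ hτIcc).deriv]
        have hq' : deriv (deriv y) τ = -(r^2 * y τ) - b τ * deriv y τ := by
          have h := hode τ hτIcc
          simp only [hbdef]
          linarith
        rw [hq']
        have hk := key_ineq (b τ) (bp τ) r (y τ) (deriv y τ) (hBpos τ hsτ) hr0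
          (hrb τ hsτ) (hbp0 τ hsτ) (hbple τ hsτ)
        have h0 : (0:ℝ) ≤ Real.exp ((1/10)*r^2 * (∫ u in s..τ, (b u)⁻¹)) := (Real.exp_pos _).le
        convert mul_nonpos_of_nonpos_of_nonneg hk h0 using 1
        · rfl
        ring
    have hGts : ((deriv y t)^2 + r^2*(y t)^2 + (1/2)*r^2*((b t)⁻¹*(y t * deriv y t)))
          * Real.exp ((1/10)*r^2 * (∫ u in s..t, (b u)⁻¹))
        ≤ ((deriv y s)^2 + r^2*(y s)^2 + (1/2)*r^2*((b s)⁻¹*(y s * deriv y s)))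
          * Real.exp ((1/10)*r^2 * (∫ u in s..s, (b u)⁻¹)) :=
      hanti (left_mem_Icc.mpr hst) (right_mem_Icc.mpr hst) hst
    have hGs : ((deriv y s)^2 + r^2*(y s)^2 + (1/2)*r^2*((b s)⁻¹*(y s * deriv y s)))
        * Real.exp ((1/10)*r^2 * (∫ u in s..s, (b u)⁻¹)) = r^2 := by
      rw [intervalIntegral.integral_same, hys, hys']
      norm_num
    rw [hGs] at hGts
    set It := ∫ u in s..t, (b u)⁻¹ with hItdef
    set Et := Real.exp ((1/10)*r^2 * It) with hEtdef
    have hEt : 0 < Et := Real.exp_pos _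
    have hv0 : (0:ℝ) ≤ (b t)⁻¹ := (inv_pos.mpr (hBpos t hst)).le
    have hrv : r * (b t)⁻¹ ≤ 1 := by
      rw [← div_eq_mul_inv]
      exact (div_le_one (hBpos t hst)).mpr (hrb t hst)
    have hFt : (3/4)*(r^2*(y t)^2) ≤
        (deriv y t)^2 + r^2*(y t)^2 + (1/2)*r^2*((b t)⁻¹*(y t * deriv y t)) := by
      rcases le_or_gt 0 (y t * deriv y t) with hpq | hpq
      · nlinarith [mul_nonneg hv0 hpq, sq_nonneg (deriv y t), sq_nonneg (r * y t),
          mul_nonneg (mul_nonneg (by norm_num : (0:ℝ) ≤ 1/2) (sq_nonneg r)) (mul_nonneg hv0 hpq)]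
      · have hpq' : 0 ≤ -(y t * deriv y t) := by linarith
        nlinarith [mul_nonneg (sub_nonneg.mpr hrv) (mul_nonneg hr0 hpq'),
          sq_nonneg (r * y t + deriv y t), mul_nonneg hv0 hpq', mul_nonneg hr0 hpq']
    have hX : (y t)^2 * Et ≤ 4/3 := by
      nlinarith [mul_le_mul_of_nonneg_right hFt hEt.le, mul_pos hrpos hrpos, hGts, hEt]
    have hXe : (y t)^2 ≤ (4/3) * Real.exp (-((1/10)*r^2*It)) := by
      have h6 := (le_div_iff₀ hEt).mpr hX
      rw [div_eq_mul_inv] at h6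
      rw [Real.exp_neg, ← hEtdef]
      exact h6
    have hexp2 : Real.exp (-((1/10)*r^2*It)) =
        Real.exp (-(1/20)*r^2*It) * Real.exp (-(1/20)*r^2*It) := by
      rw [← Real.exp_add]; ring_nf
    have hsq : (y t)^2 ≤ (2 * Real.exp (-(1/20)*r^2*It))^2 := by
      rw [mul_pow]
      nlinarith [hXe, hexp2, (Real.exp_pos (-(1/20)*r^2*It)).le]
    have habs : |y t| ≤ 2 * Real.exp (-(1/20)*r^2*It) := by
      have h2e : (0:ℝ) ≤ 2 * Real.exp (-(1/20)*r^2*It) := by positivity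
      calc |y t| = Real.sqrt ((y t)^2) := (Real.sqrt_sq_eq_abs _).symm
        _ ≤ Real.sqrt ((2 * Real.exp (-(1/20)*r^2*It))^2) := Real.sqrt_le_sqrt hsq
        _ = 2 * Real.exp (-(1/20)*r^2*It) := Real.sqrt_sq h2e
    have hIt : It = ∫ τ in s..t, (μ * (1+τ)^(-lam))⁻¹ := by
      rw [hItdef]
    rw [hIt] at habs
    exact habs
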